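/- Let u : ℝ → ℝ be bounded, globally Lipschitz, and vanish on (-∞, 0]. Then for every x > 0, lim_{α→0+} (α/Γ(1−α)) ∫_0^∞ (u(x) − u(x−y)) y^{-α-1} dy = u(x); that is, the right Marchaud derivative D^α_{x+} u(x) converges to u(x) as α ↓ 0. -/

import Mathlib

open MeasureTheory Real Set Filter Topology

/-- For `u` bounded, globally Lipschitz and vanishing on `(-∞,0]`, the right
Marchaud derivative `D^α_{x+} u(x) = (α/Γ(1−α)) ∫_0^∞ (u(x) − u(x−y)) y^{-α-1} dy`
converges to `u(x)` as `α ↓ 0`, for every `x > 0`. -/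
theorem marchaud_limit_alpha_zero
    (u : ℝ → ℝ) (M K : ℝ)
    (hM : ∀ x, |u x| ≤ M)
    (hLip : ∀ x y, |u x - u y| ≤ K * |x - y|)
    (hu0 : ∀ x ≤ (0:ℝ), u x = 0)
    (x : ℝ) (hx : 0 < x) :
    Tendsto
      (fun α : ℝ =>
        (α / Real.Gamma (1 - α)) * ∫ y in Ioi (0:ℝ), (u x - u (x - y)) * y ^ (-α - 1))
      (𝓝[>] 0) (𝓝 (u x)) := by
  have hK0 : 0 ≤ K := le_trans (abs_nonneg _) (by simpa using hLip 0 1)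
  have hu_cont : Continuous u := by
    have : LipschitzWith (Real.toNNReal K) u := by
      apply LipschitzWith.of_dist_le_mul
      intro a b
      simp only [Real.dist_eq, Real.coe_toNNReal K hK0]
      exact hLip a b
    exact this.continuous
  -- basic tendsto facts
  have ht_id : Tendsto (fun α : ℝ => α) (𝓝[>] (0:ℝ)) (𝓝 0) :=
    tendsto_id.mono_left nhdsWithin_le_nhds
  have h1sub : Tendsto (fun α : ℝ => 1 - α) (𝓝[>] (0:ℝ)) (𝓝 1) := by
    have := tendsto_const_nhds (α := ℝ) (x := (1:ℝ)) (f := 𝓝[>] (0:ℝ)) |>.sub ht_id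
    simpa using this
  have htΓ : Tendsto (fun α : ℝ => Real.Gamma (1 - α)) (𝓝[>] (0:ℝ)) (𝓝 1) := by
    have hc : ContinuousAt Real.Gamma 1 := by
      refine (Real.differentiableAt_Gamma ?_).continuousAt
      intro m
      have hm : -(m:ℝ) ≤ 0 := neg_nonpos.mpr (Nat.cast_nonneg m)
      intro h; rw [← h] at hm; linarith
    have := hc.tendsto.comp h1sub
    simpa [Function.comp_def, Real.Gamma_one] using this
  have htx1 : Tendsto (fun α : ℝ => x ^ (1 - α)) (𝓝[>] (0:ℝ)) (𝓝 x) := by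
    have := (Real.continuousAt_const_rpow (a := x) (b := (1:ℝ)) hx.ne').tendsto.comp h1sub
    simpa [Function.comp_def, Real.rpow_one] using this
  have htx0 : Tendsto (fun α : ℝ => x ^ (-α)) (𝓝[>] (0:ℝ)) (𝓝 1) := by
    have hneg : Tendsto (fun α : ℝ => -α) (𝓝[>] (0:ℝ)) (𝓝 0) := by
      simpa using ht_id.neg
    have := (Real.continuousAt_const_rpow (a := x) (b := (0:ℝ)) hx.ne').tendsto.comp hneg
    simpa [Function.comp_def, Real.rpow_zero] using this
  -- integrability and splitting for α ∈ Ioo 0 1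
  have hmem : Ioo (0:ℝ) 1 ∈ 𝓝[>] (0:ℝ) :=
    Ioo_mem_nhdsGT_of_mem ⟨le_rfl, zero_lt_one⟩
  have key : ∀ α ∈ Ioo (0:ℝ) 1,
      (IntegrableOn (fun y => (u x - u (x - y)) * y ^ (-α - 1)) (Ioc 0 x)) ∧
      (∫ y in Ioi (0:ℝ), (u x - u (x - y)) * y ^ (-α - 1)) =
        (∫ y in Ioc (0:ℝ) x, (u x - u (x - y)) * y ^ (-α - 1)) + u x * (x ^ (-α) / α) := by
    intro α hα
    obtain ⟨hα0, hα1⟩ := hα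
    have hexp : (-α - 1 : ℝ) < -1 := by linarith
    -- integrability on Ioc 0 x
    have hg_int : IntegrableOn (fun y : ℝ => K * y ^ (-α)) (Ioc 0 x) := by
      have h := intervalIntegral.intervalIntegrable_rpow' (a := 0) (b := x) (r := -α) (by linarith)
      rw [intervalIntegrable_iff, uIoc_of_le hx.le] at h
      exact h.const_mul K
    have hmeas : AEStronglyMeasurable (fun y : ℝ => (u x - u (x - y)) * y ^ (-α - 1))
        (volume.restrict (Ioc 0 x)) := by
      apply ContinuousOn.aestronglyMeasurable _ measurableSet_Ioc
      apply ContinuousOn.mul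
      · exact (continuous_const.sub (hu_cont.comp (continuous_const.sub continuous_id))).continuousOn
      · intro y hy
        exact (Real.continuousAt_rpow_const y _ (Or.inl hy.1.ne')).continuousWithinAt
    have hbound : ∀ᵐ y ∂(volume.restrict (Ioc 0 x)),
        ‖(u x - u (x - y)) * y ^ (-α - 1)‖ ≤ K * y ^ (-α) := by
      rw [ae_restrict_iff' measurableSet_Ioc]
      filter_upwards with y hy
      have hy0 : 0 < y := hy.1
      have hpow : y * y ^ (-α - 1) = y ^ (-α) := by
        have h := (Real.rpow_add hy0 1 (-α - 1)).symm
        rw [Real.rpow_one] at h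
        rw [h]; congr 1; ring
      have h1 : |u x - u (x - y)| ≤ K * y := by
        have := hLip x (x - y)
        simpa [abs_of_pos hy0] using this
      calc ‖(u x - u (x - y)) * y ^ (-α - 1)‖
          = |u x - u (x - y)| * y ^ (-α - 1) := by
            rw [norm_mul, Real.norm_eq_abs, Real.norm_eq_abs,
              abs_of_nonneg (Real.rpow_nonneg hy0.le _)]
        _ ≤ (K * y) * y ^ (-α - 1) := by
            exact mul_le_mul_of_nonneg_right h1 (Real.rpow_nonneg hy0.le _)
        _ = K * (y * y ^ (-α - 1)) := by ring
        _ = K * y ^ (-α) := by rw [hpow]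
    have hA : IntegrableOn (fun y => (u x - u (x - y)) * y ^ (-α - 1)) (Ioc 0 x) :=
      Integrable.mono' hg_int hmeas hbound
    -- on Ioi x the function equals u x * y ^ (-α-1)
    have heq : EqOn (fun y => (u x - u (x - y)) * y ^ (-α - 1))
        (fun y => u x * y ^ (-α - 1)) (Ioi x) := by
      intro y hy
      have : u (x - y) = 0 := hu0 _ (by simp only [mem_Ioi] at hy; linarith)
      simp [this]
    have hB : IntegrableOn (fun y => (u x - u (x - y)) * y ^ (-α - 1)) (Ioi x) := by
      refine IntegrableOn.congr_fun ?_ heq.symm measurableSet_Ioi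
      exact (integrableOn_Ioi_rpow_of_lt hexp hx).const_mul (u x)
    refine ⟨hA, ?_⟩
    have hsplit : (∫ y in Ioi (0:ℝ), (u x - u (x - y)) * y ^ (-α - 1)) =
        (∫ y in Ioc (0:ℝ) x, (u x - u (x - y)) * y ^ (-α - 1)) +
        (∫ y in Ioi x, (u x - u (x - y)) * y ^ (-α - 1)) := by
      rw [← setIntegral_union (Ioc_disjoint_Ioi le_rfl) measurableSet_Ioi hA hB,
        Ioc_union_Ioi_eq_Ioi hx.le]
    rw [hsplit]
    congr 1
    rw [setIntegral_congr_fun measurableSet_Ioi heq,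
      integral_const_mul, integral_Ioi_rpow_of_lt hexp hx]
    rw [show (-α - 1 + 1 : ℝ) = -α by ring]
    ring
  -- eventual equality with the nicer expression
  have hEq : (fun α : ℝ =>
        (α / Real.Gamma (1 - α)) * (∫ y in Ioc (0:ℝ) x, (u x - u (x - y)) * y ^ (-α - 1))
        + u x * x ^ (-α) / Real.Gamma (1 - α))
      =ᶠ[𝓝[>] (0:ℝ)]
      (fun α : ℝ =>
        (α / Real.Gamma (1 - α)) * ∫ y in Ioi (0:ℝ), (u x - u (x - y)) * y ^ (-α - 1)) := by
    filter_upwards [hmem] with α hα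
    obtain ⟨-, h2⟩ := key α hα
    rw [h2]
    have hα0 : (0:ℝ) < α := hα.1
    have hΓ : (0:ℝ) < Real.Gamma (1 - α) := Real.Gamma_pos_of_pos (by linarith [hα.2])
    have hmul : (α / Real.Gamma (1 - α)) * (u x * (x ^ (-α) / α)) =
        u x * x ^ (-α) / Real.Gamma (1 - α) := by
      field_simp
    rw [mul_add, hmul]
  refine Tendsto.congr' hEq ?_
  -- limit of the error term is 0
  have herr : Tendsto (fun α : ℝ =>
      (α / Real.Gamma (1 - α)) * ∫ y in Ioc (0:ℝ) x, (u x - u (x - y)) * y ^ (-α - 1))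
      (𝓝[>] (0:ℝ)) (𝓝 0) := by
    apply squeeze_zero_norm'
      (a := fun α : ℝ => (α / Real.Gamma (1 - α)) * (K * (x ^ (1 - α) / (1 - α))))
    · filter_upwards [hmem] with α hα
      obtain ⟨hα0, hα1⟩ := hα
      have hΓ : (0:ℝ) < Real.Gamma (1 - α) := Real.Gamma_pos_of_pos (by linarith)
      have hg_int : IntegrableOn (fun y : ℝ => K * y ^ (-α)) (Ioc 0 x) := by
        have h := intervalIntegral.intervalIntegrable_rpow' (a := 0) (b := x) (r := -α) (by linarith)
        rw [intervalIntegrable_iff, uIoc_of_le hx.le] at h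
        exact h.const_mul K
      have hbound : ∀ᵐ y ∂(volume.restrict (Ioc 0 x)),
          ‖(u x - u (x - y)) * y ^ (-α - 1)‖ ≤ K * y ^ (-α) := by
        rw [ae_restrict_iff' measurableSet_Ioc]
        filter_upwards with y hy
        have hy0 : 0 < y := hy.1
        have hpow : y * y ^ (-α - 1) = y ^ (-α) := by
          have h := (Real.rpow_add hy0 1 (-α - 1)).symm
          rw [Real.rpow_one] at h
          rw [h]; congr 1; ring
        have h1 : |u x - u (x - y)| ≤ K * y := by
          have := hLip x (x - y)
          simpa [abs_of_pos hy0] using this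
        calc ‖(u x - u (x - y)) * y ^ (-α - 1)‖
            = |u x - u (x - y)| * y ^ (-α - 1) := by
              rw [norm_mul, Real.norm_eq_abs, Real.norm_eq_abs,
                abs_of_nonneg (Real.rpow_nonneg hy0.le _)]
          _ ≤ (K * y) * y ^ (-α - 1) := by
              exact mul_le_mul_of_nonneg_right h1 (Real.rpow_nonneg hy0.le _)
          _ = K * (y * y ^ (-α - 1)) := by ring
          _ = K * y ^ (-α) := by rw [hpow]
      have hnormint : ‖∫ y in Ioc (0:ℝ) x, (u x - u (x - y)) * y ^ (-α - 1)‖ ≤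
          ∫ y in Ioc (0:ℝ) x, K * y ^ (-α) :=
        norm_integral_le_of_norm_le hg_int hbound
      have hval : (∫ y in Ioc (0:ℝ) x, K * y ^ (-α)) = K * (x ^ (1 - α) / (1 - α)) := by
        rw [integral_const_mul]
        rw [← intervalIntegral.integral_of_le hx.le]
        rw [integral_rpow (Or.inl (by linarith : (-1:ℝ) < -α))]
        rw [Real.zero_rpow (by linarith : (-α + 1 : ℝ) ≠ 0)]
        rw [show (-α + 1 : ℝ) = 1 - α by ring]
        ring
      rw [norm_mul]
      have hcoef : ‖α / Real.Gamma (1 - α)‖ = α / Real.Gamma (1 - α) :=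
        abs_of_nonneg (div_nonneg hα0.le hΓ.le)
      rw [hcoef]
      refine mul_le_mul_of_nonneg_left ?_ (div_nonneg hα0.le hΓ.le)
      rw [← hval]; exact hnormint
    · have : Tendsto (fun α : ℝ =>
          (α / Real.Gamma (1 - α)) * (K * (x ^ (1 - α) / (1 - α))))
          (𝓝[>] (0:ℝ)) (𝓝 ((0 / 1) * (K * (x / 1)))) := by
        exact ((ht_id.div htΓ one_ne_zero).mul
          (tendsto_const_nhds.mul (htx1.div h1sub one_ne_zero)))
      simpa using this
  -- limit of the main term
  have hmain : Tendsto (fun α : ℝ => u x * x ^ (-α) / Real.Gamma (1 - α))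
      (𝓝[>] (0:ℝ)) (𝓝 (u x)) := by
    have : Tendsto (fun α : ℝ => u x * x ^ (-α) / Real.Gamma (1 - α))
        (𝓝[>] (0:ℝ)) (𝓝 (u x * 1 / 1)) :=
      (tendsto_const_nhds.mul htx0).div htΓ one_ne_zero
    simpa using this
  have := herr.add hmain
  simpa using this
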